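/- Let A ⊆ ℝ^d have positive reach, and for 1 ≤ k ≤ d let H^k(A) be the set of all a ∈ A such that the normal cone Nor(A, a) contains a k-dimensional halfspace (i.e. a set of the form {w + t v : w ∈ W, t ≥ 0} for some (k−1)-dimensional subspace W and unit vector v ⊥ W). Then H^k(A) is closed. -/

import Mathlib

open Metric Set Filter
open scoped ENNReal RealInnerProductSpace Topology NNReal

noncomputable section

variable {E : Type*} [NormedAddCommGroup E] [InnerProductSpace ℝ E]

/-- `x` has a unique nearest point in `A`. -/
def UnpPt (A : Set E) (x : E) : Prop :=
  ∃! a, a ∈ A ∧ dist x a = Metric.infDist x A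

/-- The reach of `A` at a point `a` (Federer). -/
def locReach (A : Set E) (a : E) : ℝ≥0∞ :=
  ⨆ (r : ℝ≥0) (_ : ∀ x : E, dist x a < (r : ℝ) → UnpPt A x), (r : ℝ≥0∞)

/-- The (global) reach of `A`. -/
def setReach (A : Set E) : ℝ≥0∞ := ⨅ a ∈ A, locReach A a

/-- The tangent cone of `A` at `a` in the sense of Federer. -/
def Tan (A : Set E) (a : E) : Set E :=
  {u | u = 0 ∨ ∃ (x : ℕ → E) (r : ℕ → ℝ),
    (∀ i, x i ∈ A ∧ x i ≠ a ∧ 0 < r i) ∧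
    Tendsto x atTop (nhds a) ∧
    Tendsto (fun i => r i • (x i - a)) atTop (nhds u)}

/-- The normal cone of `A` at `a`: the dual cone of the tangent cone. -/
def Nor (A : Set E) (a : E) : Set E :=
  {u | ∀ v ∈ Tan A a, ⟪u, v⟫ ≤ 0}

namespace StmtAux

open scoped Classical in
/-- A choice of nearest point. -/
def foot (A : Set E) (x : E) : E :=
  if h : ∃ y ∈ A, infDist x A = dist x y then h.choose else x

section Foot

variable [FiniteDimensional ℝ E] {A : Set E} {r : ℝ}

lemma foot_mem (hne : A.Nonempty) (hAc : IsClosed A) (x : E) : foot A x ∈ A := by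
  have h : ∃ y ∈ A, infDist x A = dist x y := hAc.exists_infDist_eq_dist hne x
  rw [foot, dif_pos h]
  exact h.choose_spec.1

lemma foot_dist (hne : A.Nonempty) (hAc : IsClosed A) (x : E) :
    dist x (foot A x) = infDist x A := by
  have h : ∃ y ∈ A, infDist x A = dist x y := hAc.exists_infDist_eq_dist hne x
  rw [foot, dif_pos h]
  exact h.choose_spec.2.symm

lemma foot_norm (hne : A.Nonempty) (hAc : IsClosed A) (x : E) :
    ‖x - foot A x‖ = infDist x A := by
  rw [← dist_eq_norm]; exact foot_dist hne hAc x

lemma foot_unique (hne : A.Nonempty) (hAc : IsClosed A)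
    (hU : ∀ x, infDist x A < r → UnpPt A x) {x b : E} (hx : infDist x A < r)
    (hb : b ∈ A) (hd : dist x b = infDist x A) : b = foot A x := by
  obtain ⟨w, _hw, huniq⟩ := hU x hx
  rw [huniq b ⟨hb, hd⟩, huniq _ ⟨foot_mem hne hAc x, foot_dist hne hAc x⟩]

lemma foot_prox (hne : A.Nonempty) (hAc : IsClosed A) {c : E} (x : E) (hc : c ∈ A) :
    2 * ⟪x - foot A x, c - foot A x⟫ ≤ ‖c - foot A x‖ ^ 2 := by
  set p := foot A x with hp
  have h2 : ‖x - p‖ ≤ ‖x - c‖ := by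
    rw [← dist_eq_norm, ← dist_eq_norm]
    exact (foot_dist hne hAc x) ▸ infDist_le_dist_of_mem hc
  have h3 : ‖x - c‖ ^ 2 = ‖x - p‖ ^ 2 - 2 * ⟪x - p, c - p⟫ + ‖c - p‖ ^ 2 := by
    have he : x - c = (x - p) + -(c - p) := by abel
    rw [he, norm_add_sq_real, inner_neg_right, norm_neg]
    ring
  nlinarith [h2, sq_nonneg (‖x - c‖ - ‖x - p‖), norm_nonneg (x - p), norm_nonneg (x - c)]

end Foot

/-- membership in `Nor` from a quadratic inequality. -/
lemma mem_nor_of_quadratic {A : Set E} {a v : E} {C : ℝ} (hC : 0 ≤ C)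
    (h : ∀ c ∈ A, ⟪v, c - a⟫ ≤ C * ‖c - a‖ ^ 2) : v ∈ Nor A a := by
  intro u hu
  rcases hu with h0 | ⟨x, ρ, hprop, hxa, hlim⟩
  · simp [h0]
  · have l1 : Tendsto (fun i => ⟪v, ρ i • (x i - a)⟫) atTop (𝓝 ⟪v, u⟫) :=
      Tendsto.inner tendsto_const_nhds hlim
    have hd0 : Tendsto (fun i => ‖x i - a‖) atTop (𝓝 0) := by
      have : Tendsto (fun i => x i - a) atTop (𝓝 (a - a)) := hxa.sub tendsto_const_nhds
      simpa using this.norm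
    have l2 : Tendsto (fun i => C * (‖ρ i • (x i - a)‖ * ‖x i - a‖)) atTop
        (𝓝 (C * (‖u‖ * 0))) :=
      (tendsto_const_nhds.mul (hlim.norm.mul hd0))
    have hle : ∀ i, ⟪v, ρ i • (x i - a)⟫ ≤ C * (‖ρ i • (x i - a)‖ * ‖x i - a‖) := by
      intro i
      have hρ : 0 < ρ i := (hprop i).2.2
      have : ⟪v, ρ i • (x i - a)⟫ = ρ i * ⟪v, x i - a⟫ := real_inner_smul_right _ _ _
      rw [this, norm_smul, Real.norm_eq_abs, abs_of_pos hρ]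
      calc ρ i * ⟪v, x i - a⟫ ≤ ρ i * (C * ‖x i - a‖ ^ 2) := by
            exact mul_le_mul_of_nonneg_left (h (x i) (hprop i).1) hρ.le
        _ = C * (ρ i * ‖x i - a‖ * ‖x i - a‖) := by ring
    have := le_of_tendsto_of_tendsto' l1 l2 hle
    simpa using this

lemma smul_mem_nor {A : Set E} {a v : E} (hv : v ∈ Nor A a) {t : ℝ} (ht : 0 ≤ t) :
    t • v ∈ Nor A a := by
  intro u hu
  have := hv u hu
  rw [real_inner_smul_left]
  exact mul_nonpos_of_nonneg_of_nonpos ht this |>.trans_eq rfl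

section Cont

variable [FiniteDimensional ℝ E] {A : Set E} {r : ℝ}

lemma foot_continuousOn (hne : A.Nonempty) (hAc : IsClosed A)
    (hU : ∀ x, infDist x A < r → UnpPt A x) :
    ContinuousOn (foot A) {x : E | infDist x A < r} := by
  rw [Metric.continuousOn_iff]
  by_contra hcon
  push_neg at hcon
  obtain ⟨x, hx, ε, hε, hseq⟩ := hcon
  have hy : ∀ n : ℕ, ∃ a ∈ {x : E | infDist x A < r},
      dist a x < 1 / (n + 1) ∧ ε ≤ dist (foot A a) (foot A x) := by
    intro n
    obtain ⟨a, ha, h1, h2⟩ := hseq (1 / (n + 1)) (by positivity)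
    exact ⟨a, ha, h1, h2⟩
  choose y hy1 hy2 hy3 using hy
  have hyx : Tendsto y atTop (𝓝 x) := by
    rw [tendsto_iff_dist_tendsto_zero]
    apply squeeze_zero (fun n => dist_nonneg) (fun n => (hy2 n).le)
    exact tendsto_one_div_add_atTop_nhds_zero_nat
  set q : ℕ → E := fun n => foot A (y n) with hq
  have hqball : ∀ n, q n ∈ closedBall x (infDist x A + 2) := by
    intro n
    have h1 : dist (y n) (q n) = infDist (y n) A := foot_dist hne hAc (y n)
    have h2 : infDist (y n) A ≤ infDist x A + dist (y n) x := infDist_le_infDist_add_dist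
    have h3 : dist (y n) x ≤ 1 := by
      have := hy2 n
      have : dist (y n) x < 1 / ((n : ℝ) + 1) := this
      have hle : 1 / ((n : ℝ) + 1) ≤ 1 := by
        rw [div_le_one (by positivity)]
        simp
      linarith
    have : dist (q n) x ≤ dist (q n) (y n) + dist (y n) x := dist_triangle _ _ _
    rw [mem_closedBall]
    rw [dist_comm] at h1
    linarith
  obtain ⟨c, _hc, φ, hφ, hqc⟩ := (isCompact_closedBall x (infDist x A + 2)).tendsto_subseq hqball
  have hcA : c ∈ A := hAc.mem_of_tendsto hqc
    (Filter.Eventually.of_forall (fun n => foot_mem hne hAc (y (φ n))))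
  have hyφ : Tendsto (y ∘ φ) atTop (𝓝 x) := hyx.comp hφ.tendsto_atTop
  have t1 : Tendsto (fun n => dist (y (φ n)) (q (φ n))) atTop (𝓝 (dist x c)) :=
    Tendsto.dist hyφ hqc
  have t2 : Tendsto (fun n => dist (y (φ n)) (q (φ n))) atTop (𝓝 (infDist x A)) := by
    have : Tendsto (fun n => infDist (y (φ n)) A) atTop (𝓝 (infDist x A)) :=
      ((continuous_infDist_pt A).tendsto x).comp hyφ
    apply this.congr
    intro n
    exact (foot_dist hne hAc (y (φ n))).symm
  have hdc : dist x c = infDist x A := tendsto_nhds_unique t1 t2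
  have hcfoot : c = foot A x := foot_unique hne hAc hU hx hcA hdc
  have t3 : Tendsto (fun n => dist (q (φ n)) (foot A x)) atTop (𝓝 (dist c (foot A x))) :=
    Tendsto.dist hqc tendsto_const_nhds
  have hge : ε ≤ dist c (foot A x) :=
    le_of_tendsto_of_tendsto' tendsto_const_nhds t3 (fun n => hy3 (φ n))
  rw [← hcfoot] at hge
  simp at hge
  linarith

end Cont

section Atomic

variable [FiniteDimensional ℝ E] {A : Set E} {r : ℝ}

lemma step_arith {D h η H δ' : ℝ} (hD : H ≤ D) (hH : 0 < H) (hh : 0 < h)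
    (hη : 0 ≤ η) (hηH : η ≤ H) (hδ' : 0 ≤ δ')
    (hsq : (D + h) ^ 2 - h / D * η ^ 2 ≤ δ' ^ 2) :
    D + h - h * η ^ 2 / H ^ 2 ≤ δ' := by
  have hDpos : 0 < D := lt_of_lt_of_le hH hD
  obtain ⟨e, he⟩ : ∃ e : ℝ, e = h * η ^ 2 / H ^ 2 := ⟨_, rfl⟩
  rw [← he]
  have he0 : 0 ≤ e := by rw [he]; positivity
  have hη2 : η ^ 2 ≤ H ^ 2 := by nlinarith
  have heh : e ≤ h := by
    rw [he, div_le_iff₀ (by positivity)]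
    nlinarith
  have hH2D2 : H ^ 2 ≤ D ^ 2 := by nlinarith
  have h1 : h / D * η ^ 2 ≤ e * D := by
    rw [he, div_mul_eq_mul_div, div_mul_eq_mul_div, div_le_div_iff₀ hDpos (by positivity)]
    nlinarith [mul_nonneg (mul_nonneg hh.le (sq_nonneg η)) (sub_nonneg.2 hH2D2)]
  have key : (D + h - e) ^ 2 ≤ (D + h) ^ 2 - h / D * η ^ 2 := by nlinarith
  have h2 : 0 ≤ D + h - e := by linarith
  nlinarith

set_option maxHeartbeats 1000000 in
lemma ascend (hne : A.Nonempty) (hAc : IsClosed A) (hr : 0 < r)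
    (hU : ∀ x, infDist x A < r → UnpPt A x)
    {Y : E} {H ε : ℝ} (hH : 0 < H) (hYd : infDist Y A = H)
    (hε : 0 < ε) (hHr : H + 2 * ε < r) :
    infDist (Y + (ε / H) • (Y - foot A Y)) A = H + ε := by
  set b := foot A Y with hb
  have hbA : b ∈ A := foot_mem hne hAc Y
  have hbd : ‖Y - b‖ = H := by rw [foot_norm hne hAc Y, hYd]
  have hKtube : closedBall Y ε ⊆ {x : E | infDist x A < r} := by
    intro z hz
    rw [mem_closedBall] at hz
    have : infDist z A ≤ infDist Y A + dist z Y := infDist_le_infDist_add_dist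
    simp only [mem_setOf_eq]
    linarith
  have hcont : ContinuousOn (foot A) (closedBall Y ε) :=
    (foot_continuousOn hne hAc hU).mono hKtube
  have hUC := (isCompact_closedBall Y ε).uniformContinuousOn_of_continuous hcont
  rw [Metric.uniformContinuousOn_iff] at hUC
  -- Step 2 : polygonal ascent
  have step2 : ∀ η : ℝ, 0 < η → η ≤ H →
      ∃ z : E, dist z Y ≤ ε ∧ H + ε * (1 - η ^ 2 / H ^ 2) ≤ infDist z A := by
    intro η hη hηH
    obtain ⟨τ, hτ, hmod⟩ := hUC η hη
    obtain ⟨N0, hN0⟩ := exists_nat_gt (ε / τ)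
    set N := N0 + 1 with hN
    have hNpos : 0 < (N : ℝ) := by positivity
    set h := ε / N with hhdef
    have hh : 0 < h := by positivity
    have hNh : (N : ℝ) * h = ε := by
      rw [hhdef]; field_simp
    have hhτ : h < τ := by
      rw [hhdef, div_lt_iff₀ hNpos]
      have h1 : ε / τ < (N : ℝ) := lt_of_lt_of_le hN0 (by exact_mod_cast Nat.le_succ N0)
      calc ε = ε / τ * τ := by field_simp
        _ < (N : ℝ) * τ := by exact mul_lt_mul_of_pos_right h1 hτ
        _ = τ * (N : ℝ) := by ring
    clear_value N
    clear_value h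
    have hfac : 0 ≤ 1 - η ^ 2 / H ^ 2 := by
      have h1 : η ^ 2 ≤ H ^ 2 := by nlinarith
      have h2 : η ^ 2 / H ^ 2 ≤ 1 := by
        rw [div_le_one (by positivity)]; exact h1
      linarith
    have main : ∀ k : ℕ, k ≤ N → ∃ z : E, dist z Y ≤ k * h ∧
        H + k * (h * (1 - η ^ 2 / H ^ 2)) ≤ infDist z A ∧
        infDist z A ≤ H + k * h := by
      intro k
      induction k with
      | zero => intro _; exact ⟨Y, by simp, by simp [hYd], by simp [hYd]⟩
      | succ k ih =>
        intro hk1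
        obtain ⟨x, ih1, ih2, ih3⟩ := ih (le_trans (Nat.le_succ k) hk1)
        set D := infDist x A with hD
        clear_value D
        set p := foot A x with hp
        clear_value p
        have hk0 : (0:ℝ) ≤ (k : ℝ) := Nat.cast_nonneg k
        have hterm : 0 ≤ (k:ℝ) * (h * (1 - η ^ 2 / H ^ 2)) :=
          mul_nonneg hk0 (mul_nonneg hh.le hfac)
        have hHD : H ≤ D := by linarith only [ih2, hterm]
        have hDpos : 0 < D := lt_of_lt_of_le hH hHD
        have hxp : ‖x - p‖ = D := by rw [hp, hD]; exact foot_norm hne hAc x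
        obtain ⟨x', hx'def⟩ : ∃ x' : E, x' = x + (h / D) • (x - p) := ⟨_, rfl⟩
        have hstep : ‖x' - x‖ = h := by
          rw [hx'def]
          simp only [add_sub_cancel_left]
          rw [norm_smul, hxp, Real.norm_eq_abs, abs_of_pos (by positivity)]
          field_simp
        have hkN : (k : ℝ) + 1 ≤ (N : ℝ) := by exact_mod_cast hk1
        have hk1h : ((k : ℝ) + 1) * h ≤ ε := by
          calc ((k : ℝ) + 1) * h ≤ (N : ℝ) * h := mul_le_mul_of_nonneg_right hkN hh.le
            _ = ε := hNh
        have hkh : (k : ℝ) * h ≤ ε := by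
          have : (k : ℝ) * h ≤ ((k : ℝ) + 1) * h :=
            mul_le_mul_of_nonneg_right (by linarith only []) hh.le
          linarith only [this, hk1h]
        have hxK : x ∈ closedBall Y ε := by
          rw [mem_closedBall]; linarith only [ih1, hkh]
        have hdx'Y : dist x' Y ≤ ((k : ℝ) + 1) * h := by
          calc dist x' Y ≤ dist x' x + dist x Y := dist_triangle _ _ _
            _ ≤ h + k * h := by
                rw [dist_eq_norm]
                exact add_le_add (le_of_eq hstep) ih1
            _ = ((k : ℝ) + 1) * h := by ring
        have hx'K : x' ∈ closedBall Y ε := by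
          rw [mem_closedBall]; linarith only [hdx'Y, hk1h]
        have hfeet : dist (foot A x') p < η := by
          rw [hp]
          apply hmod x' hx'K x hxK
          rw [dist_eq_norm, hstep]; exact hhτ
        set c := foot A x' with hc
        have hcA : c ∈ A := by rw [hc]; exact foot_mem hne hAc x'
        have hδ'' : ‖x' - c‖ = infDist x' A := by rw [hc]; exact foot_norm hne hAc x'
        have hL2 : 2 * ⟪x - p, c - p⟫ ≤ ‖c - p‖ ^ 2 := by
          rw [hp]; exact foot_prox hne hAc x hcA
        clear_value c
        have hcp : ‖c - p‖ < η := by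
          rw [← dist_eq_norm]; exact hfeet
        have hcp2 : ‖c - p‖ ^ 2 ≤ η ^ 2 := by
          have := norm_nonneg (c - p)
          nlinarith [hcp]
        have hxc : D ≤ ‖x - c‖ := by
          rw [hD, ← dist_eq_norm]
          exact infDist_le_dist_of_mem hcA
        have hxc2 : D ^ 2 ≤ ‖x - c‖ ^ 2 := pow_le_pow_left₀ hDpos.le hxc 2
        have hexp : ‖x' - c‖ ^ 2 =
            ‖x - c‖ ^ 2 + 2 * (h / D * ⟪x - c, x - p⟫) + (h / D) ^ 2 * D ^ 2 := by
          have hxc' : x' - c = (x - c) + (h / D) • (x - p) := by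
            rw [hx'def]; abel
          rw [hxc', norm_add_sq_real, real_inner_smul_right, norm_smul,
            Real.norm_eq_abs, abs_of_pos (by positivity : (0:ℝ) < h / D), hxp]
          ring
        have hinner : D ^ 2 - η ^ 2 / 2 ≤ ⟪x - c, x - p⟫ := by
          have hsplit : x - c = (x - p) + (p - c) := by abel
          have heq : ⟪x - c, x - p⟫ = ‖x - p‖ ^ 2 - ⟪x - p, c - p⟫ := by
            rw [hsplit, inner_add_left]
            have h1 : ⟪p - c, x - p⟫ = -⟪x - p, c - p⟫ := by
              rw [real_inner_comm]
              have h2 : p - c = -(c - p) := by abel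
              rw [h2, inner_neg_right]
            rw [h1, real_inner_self_eq_norm_sq]
            ring
          rw [heq, hxp]
          linarith only [hL2, hcp2]
        have hsq : (D + h) ^ 2 - h / D * η ^ 2 ≤ ‖x' - c‖ ^ 2 := by
          have hDD : (h / D) ^ 2 * D ^ 2 = h ^ 2 := by field_simp
          have h1 : h / D * (D ^ 2 - η ^ 2 / 2) ≤ h / D * ⟪x - c, x - p⟫ :=
            mul_le_mul_of_nonneg_left hinner (by positivity)
          have h4 : h / D * (D ^ 2 - η ^ 2 / 2) = h * D - h / D * η ^ 2 / 2 := by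
            field_simp
          have h5 : (D + h) ^ 2 = D ^ 2 + 2 * (h * D) + h ^ 2 := by ring
          linarith only [hexp, hDD, h1, h4, h5, hxc2]
        have hlow : D + h - h * η ^ 2 / H ^ 2 ≤ ‖x' - c‖ :=
          step_arith hHD hH hh hη.le hηH (norm_nonneg _) hsq
        refine ⟨x', by push_cast; linarith only [hdx'Y], ?_, ?_⟩
        · rw [← hδ'']
          push_cast
          have hexpand : ((k:ℝ) + 1) * (h * (1 - η ^ 2 / H ^ 2)) =
              (k:ℝ) * (h * (1 - η ^ 2 / H ^ 2)) + h * (1 - η ^ 2 / H ^ 2) := by ring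
          have hq : h * (1 - η ^ 2 / H ^ 2) = h - h * η ^ 2 / H ^ 2 := by ring
          linarith only [ih2, hlow, hexpand, hq]
        · have h3 : infDist x' A ≤ D + dist x' x := by
            rw [hD]
            exact infDist_le_infDist_add_dist
          rw [dist_eq_norm, hstep] at h3
          push_cast
          have hexpand : ((k:ℝ) + 1) * h = (k:ℝ) * h + h := by ring
          linarith only [ih3, h3, hexpand]
    obtain ⟨z, m1, m2, _m3⟩ := main N (le_refl N)
    refine ⟨z, ?_, ?_⟩
    · rw [← hNh]; exact m1
    · calc H + ε * (1 - η ^ 2 / H ^ 2) = H + (N : ℝ) * (h * (1 - η ^ 2 / H ^ 2)) := by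
            rw [← hNh]; ring
        _ ≤ infDist z A := m2
  -- Step 3 : limit point
  have hzs : ∀ m : ℕ, ∃ z : E, dist z Y ≤ ε ∧
      H + ε * (1 - 1 / ((m : ℝ) + 1) ^ 2) ≤ infDist z A := by
    intro m
    have hpos : (0:ℝ) < (m : ℝ) + 1 := by positivity
    obtain ⟨z, hz1, hz2⟩ := step2 (H / ((m : ℝ) + 1)) (by positivity)
      (by
        rw [div_le_iff₀ hpos]
        nlinarith [hH.le, (Nat.cast_nonneg m : (0:ℝ) ≤ (m:ℝ))])
    refine ⟨z, hz1, ?_⟩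
    have hrw : (H / ((m : ℝ) + 1)) ^ 2 / H ^ 2 = 1 / ((m : ℝ) + 1) ^ 2 := by
      rw [div_pow]
      field_simp
    rw [hrw] at hz2
    exact hz2
  choose z hz1 hz2 using hzs
  have hzball : ∀ m, z m ∈ closedBall Y ε := fun m => mem_closedBall.2 (hz1 m)
  obtain ⟨z0, hz0ball, φ, hφ, hzφ⟩ := (isCompact_closedBall Y ε).tendsto_subseq hzball
  have T1 : Tendsto (fun m => infDist (z (φ m)) A) atTop (𝓝 (infDist z0 A)) :=
    ((continuous_infDist_pt A).tendsto _).comp hzφ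
  have T0 : Tendsto (fun m : ℕ => 1 / ((m : ℝ) + 1) ^ 2) atTop (𝓝 0) := by
    have h := tendsto_one_div_add_atTop_nhds_zero_nat (𝕜 := ℝ)
    have h2 := h.mul h
    have heq : (fun m : ℕ => 1 / ((m : ℝ) + 1) ^ 2) =
        fun m : ℕ => 1 / ((m : ℝ) + 1) * (1 / ((m : ℝ) + 1)) := by
      funext m
      rw [div_mul_div_comm, one_mul, sq]
    rw [heq]
    simpa using h2
  have T2 : Tendsto (fun m : ℕ => H + ε * (1 - 1 / ((m : ℝ) + 1) ^ 2)) atTop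
      (𝓝 (H + ε * (1 - 0))) :=
    tendsto_const_nhds.add (tendsto_const_nhds.mul (tendsto_const_nhds.sub T0))
  have hbound : ∀ m : ℕ, H + ε * (1 - 1 / ((m : ℝ) + 1) ^ 2) ≤ infDist (z (φ m)) A := by
    intro m
    have hmono : 1 / ((φ m : ℝ) + 1) ^ 2 ≤ 1 / ((m : ℝ) + 1) ^ 2 := by
      apply one_div_le_one_div_of_le (by positivity)
      have : (m : ℝ) ≤ (φ m : ℝ) := by exact_mod_cast hφ.le_apply
      nlinarith [(Nat.cast_nonneg m : (0:ℝ) ≤ (m:ℝ))]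
    have := hz2 (φ m)
    have hε' : 0 ≤ ε := hε.le
    nlinarith [this]
  have hgeq : H + ε * (1 - 0) ≤ infDist z0 A := le_of_tendsto_of_tendsto' T2 T1 hbound
  have hdzY : dist z0 Y ≤ ε := mem_closedBall.1 hz0ball
  have hle : infDist z0 A ≤ H + ε := by
    have h1 : infDist z0 A ≤ infDist Y A + dist z0 Y := infDist_le_infDist_add_dist
    rw [hYd] at h1
    linarith only [h1, hdzY]
  have heq : infDist z0 A = H + ε := le_antisymm hle (by linarith only [hgeq])
  -- Step 4 : rigidity
  have hzYn : ‖z0 - Y‖ ≤ ε := by rw [← dist_eq_norm]; exact hdzY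
  have h1 : H + ε ≤ ‖z0 - b‖ := by
    rw [← dist_eq_norm, ← heq]
    exact infDist_le_dist_of_mem hbA
  have hsplit : z0 - b = (z0 - Y) + (Y - b) := by abel
  have h2 : ‖z0 - b‖ ≤ ‖z0 - Y‖ + ‖Y - b‖ := by rw [hsplit]; exact norm_add_le _ _
  have hPe : ‖z0 - Y‖ = ε := by
    rw [hbd] at h2
    linarith only [h1, h2, hzYn]
  have hNb : ‖z0 - b‖ = H + ε := by
    rw [hbd] at h2
    have := hzYn
    exact le_antisymm (by linarith only [h2, hzYn]) h1
  have hin : ⟪z0 - Y, Y - b⟫ = ε * H := by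
    have hx := norm_add_sq_real (z0 - Y) (Y - b)
    rw [← hsplit, hNb, hPe, hbd] at hx
    nlinarith [hx]
  have hkey : ‖Y - b‖ • (z0 - Y) = ‖z0 - Y‖ • (Y - b) := by
    rw [← inner_eq_norm_mul_iff_real]
    rw [hin, hPe, hbd]
  rw [hbd, hPe] at hkey
  have hfin : Y + (ε / H) • (Y - b) = z0 := by
    have hH0 : H ≠ 0 := ne_of_gt hH
    have : (ε / H) • (Y - b) = (1 / H) • (ε • (Y - b)) := by
      rw [smul_smul]
      congr 1
      field_simp
    rw [this, ← hkey, smul_smul]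
    rw [one_div_mul_cancel hH0, one_smul]
    abel
  rw [hfin, heq]

end Atomic

section Extend

variable [FiniteDimensional ℝ E] {A : Set E} {r : ℝ}

lemma extend (hne : A.Nonempty) (hAc : IsClosed A) (hr : 0 < r)
    (hU : ∀ x, infDist x A < r → UnpPt A x)
    {a v : E} (ha : a ∈ A) (hv : ‖v‖ = 1) {τ : ℝ} (hτ0 : 0 < τ) (hτr : τ < r / 2)
    (hprox : infDist (a + τ • v) A = τ) :
    infDist (a + (r / 2) • v) A = r / 2 := by
  set Y := a + τ • v with hY
  have hdYa : dist Y a = τ := by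
    rw [hY, dist_eq_norm, add_sub_cancel_left, norm_smul, Real.norm_eq_abs,
      abs_of_pos hτ0, hv, mul_one]
  have hin : infDist Y A < r := by rw [hprox]; linarith
  have hfoot : a = foot A Y := foot_unique hne hAc hU hin ha (by rw [hdYa, hprox])
  set ε := r / 2 - τ with hε
  have hε0 : 0 < ε := by rw [hε]; linarith
  have hHr : τ + 2 * ε < r := by rw [hε]; linarith
  have h := ascend hne hAc hr hU hτ0 hprox hε0 hHr
  have hYb : Y - foot A Y = τ • v := by rw [← hfoot, hY]; abel
  rw [hYb] at h
  have hsm : (ε / τ) • τ • v = ε • v := by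
    rw [smul_smul, div_mul_cancel₀]
    exact ne_of_gt hτ0
  rw [hsm] at h
  have hYε : Y + ε • v = a + (r / 2) • v := by
    rw [hY, hε, add_assoc, ← add_smul]
    congr 2
    ring
  rw [hYε] at h
  rw [h, hε]
  ring

lemma prox_quad (hne : A.Nonempty) (hAc : IsClosed A) (hr : 0 < r)
    (hU : ∀ x, infDist x A < r → UnpPt A x)
    {a v : E} (ha : a ∈ A) (hv : ‖v‖ = 1) {τ : ℝ} (hτ0 : 0 < τ) (hτr : τ < r / 2)
    (hprox : infDist (a + τ • v) A = τ) :
    ∀ c ∈ A, ⟪v, c - a⟫ ≤ ‖c - a‖ ^ 2 / r := by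
  have hext := extend hne hAc hr hU ha hv hτ0 hτr hprox
  intro c hc
  have h1 : r / 2 ≤ dist (a + (r / 2) • v) c := by
    have := infDist_le_dist_of_mem (x := a + (r / 2) • v) hc
    rw [hext] at this
    exact this
  have h2 : (r / 2) ^ 2 ≤ ‖(r / 2) • v - (c - a)‖ ^ 2 := by
    have he : a + (r / 2) • v - c = (r / 2) • v - (c - a) := by abel
    rw [dist_eq_norm, he] at h1
    nlinarith [norm_nonneg ((r / 2) • v - (c - a)), h1, hr]
  rw [norm_sub_sq_real, norm_smul, Real.norm_eq_abs, abs_of_pos (by linarith : (0:ℝ) < r / 2),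
    hv, real_inner_smul_left] at h2
  rw [le_div_iff₀ hr]
  nlinarith [h2]

end Extend

section Key

variable [FiniteDimensional ℝ E] {A : Set E} {r : ℝ}

set_option maxHeartbeats 1000000 in
lemma key (hne : A.Nonempty) (hAc : IsClosed A) (hr : 0 < r)
    (hU : ∀ x, infDist x A < r → UnpPt A x)
    {a v : E} (ha : a ∈ A) (hv : ‖v‖ = 1) (hN : v ∈ Nor A a) :
    ∀ c ∈ A, ⟪v, c - a⟫ ≤ ‖c - a‖ ^ 2 / r := by
  have hvne : v ≠ 0 := by
    intro h0; rw [h0, norm_zero] at hv; norm_num at hv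
  have hxa : ∀ t : ℝ, 0 < t → ‖a + t • v - a‖ = t := fun t ht => by
    rw [add_sub_cancel_left, norm_smul, Real.norm_eq_abs, abs_of_pos ht, hv, mul_one]
  by_cases hA : ∃ t : ℝ, 0 < t ∧ t ≤ r / 4 ∧ infDist (a + t • v) A = t
  · obtain ⟨t, ht0, htr, hteq⟩ := hA
    exact prox_quad hne hAc hr hU ha hv ht0 (by linarith) hteq
  push_neg at hA
  have hlt : ∀ t : ℝ, 0 < t → t ≤ r / 4 → infDist (a + t • v) A < t := by
    intro t ht0 htr
    have h1 : infDist (a + t • v) A ≤ t := by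
      have h2 := infDist_le_dist_of_mem (x := a + t • v) ha
      rwa [dist_eq_norm, hxa t ht0] at h2
    exact lt_of_le_of_ne h1 (hA t ht0 htr)
  by_cases hB : ∃ t₁ : ℝ, 0 < t₁ ∧ t₁ ≤ r / 4 ∧ ∀ t : ℝ, 0 < t → t ≤ t₁ → a + t • v ∉ A
  swap
  · -- otherwise v would be a tangent vector : contradiction
    exfalso
    push_neg at hB
    have hBe : ∀ i : ℕ, ∃ t : ℝ, 0 < t ∧ t ≤ r / 4 / ((i : ℝ) + 1) ∧ a + t • v ∈ A := by
      intro i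
      have hp : (0:ℝ) < r / 4 / ((i : ℝ) + 1) := by positivity
      have hle : r / 4 / ((i : ℝ) + 1) ≤ r / 4 := by
        rw [div_le_iff₀ (by positivity : (0:ℝ) < (i:ℝ) + 1)]
        nlinarith [hr, (Nat.cast_nonneg i : (0:ℝ) ≤ (i:ℝ))]
      obtain ⟨t, ht0, htle, htA⟩ := hB _ hp hle
      exact ⟨t, ht0, htle, htA⟩
    choose t ht0 htle htA using hBe
    have hvTan : v ∈ Tan A a := by
      right
      refine ⟨fun i => a + t i • v, fun i => (t i)⁻¹,
        fun i => ⟨htA i, ?_, by have := ht0 i; positivity⟩, ?_, ?_⟩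
      · intro hEq
        have h1 : t i • v = 0 := by
          have h2 := congrArg (fun z => z - a) hEq
          simpa using h2
        exact smul_ne_zero (ne_of_gt (ht0 i)) hvne h1
      · rw [tendsto_iff_norm_sub_tendsto_zero]
        apply squeeze_zero (f := fun i : ℕ => ‖a + t i • v - a‖)
          (g := fun i : ℕ => r / 4 * (1 / ((i : ℝ) + 1))) (fun i => norm_nonneg _)
        · intro i
          rw [hxa (t i) (ht0 i)]
          calc t i ≤ r / 4 / ((i : ℝ) + 1) := htle i
            _ = r / 4 * (1 / ((i : ℝ) + 1)) := by ring
        · simpa using tendsto_one_div_add_atTop_nhds_zero_nat.const_mul (r / 4)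
      · have heq : (fun i => (t i)⁻¹ • (a + t i • v - a)) = fun _ => v := by
          funext i
          rw [add_sub_cancel_left, smul_smul, inv_mul_cancel₀ (ne_of_gt (ht0 i)), one_smul]
        rw [heq]
        exact tendsto_const_nhds
    have hcon := hN v hvTan
    rw [real_inner_self_eq_norm_sq, hv] at hcon
    norm_num at hcon
  obtain ⟨t₁, ht₁0, ht₁r, ht₁A⟩ := hB
  -- the approximation claim
  have claim : ∀ θ : ℝ, 0 < θ → θ ≤ 1 → ∃ b w : E, b ∈ A ∧ ‖b - a‖ ≤ θ ∧ ‖w - v‖ ≤ θ ∧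
      ∀ c ∈ A, ⟪w, c - b⟫ ≤ ‖c - b‖ ^ 2 / r := by
    intro θ hθ hθ1
    set t₂ := min t₁ (θ / 2) with ht₂def
    have ht₂0 : 0 < t₂ := lt_min ht₁0 (by linarith)
    have ht₂t₁ : t₂ ≤ t₁ := min_le_left _ _
    have ht₂θ : t₂ ≤ θ / 2 := min_le_right _ _
    -- basic facts for each small t
    have hfacts : ∀ t : ℝ, 0 < t → t ≤ t₂ →
        0 < infDist (a + t • v) A ∧ infDist (a + t • v) A < t ∧
        foot A (a + t • v) ∈ A ∧ foot A (a + t • v) ≠ a ∧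
        ‖foot A (a + t • v) - a‖ ≤ 2 * t ∧
        ‖(infDist (a + t • v) A)⁻¹ • (a + t • v - foot A (a + t • v))‖ = 1 ∧
        (∀ c ∈ A, ⟪(infDist (a + t • v) A)⁻¹ • (a + t • v - foot A (a + t • v)), c - foot A (a + t • v)⟫
          ≤ ‖c - foot A (a + t • v)‖ ^ 2 / r) := by
      intro t ht htle
      have htr4 : t ≤ r / 4 := le_trans (le_trans htle ht₂t₁) ht₁r
      have hxnA : a + t • v ∉ A := ht₁A t ht (le_trans htle ht₂t₁)
      have hδ0 : 0 < infDist (a + t • v) A := (hAc.notMem_iff_infDist_pos hne).1 hxnA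
      have hδt : infDist (a + t • v) A < t := hlt t ht htr4
      set δ := infDist (a + t • v) A with hδ
      set b := foot A (a + t • v) with hbdef
      have hbA : b ∈ A := foot_mem hne hAc _
      have hbn : ‖a + t • v - b‖ = δ := foot_norm hne hAc _
      have hba : ‖b - a‖ ≤ 2 * t := by
        have h1 : ‖b - a‖ ≤ ‖a + t • v - b‖ + ‖a + t • v - a‖ := by
          calc ‖b - a‖ = ‖-(a + t • v - b) + (a + t • v - a)‖ := by congr 1; abel
            _ ≤ ‖-(a + t • v - b)‖ + ‖a + t • v - a‖ := norm_add_le _ _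
            _ = ‖a + t • v - b‖ + ‖a + t • v - a‖ := by rw [norm_neg]
        rw [hbn, hxa t ht] at h1
        linarith
      have hbne : b ≠ a := by
        intro hEq
        rw [hEq] at hbn
        rw [hxa t ht] at hbn
        linarith
      have hwn : ‖δ⁻¹ • (a + t • v - b)‖ = 1 := by
        rw [norm_smul, Real.norm_eq_abs, abs_of_pos (by positivity), hbn]
        field_simp
      refine ⟨hδ0, hδt, hbA, hbne, hba, hwn, ?_⟩
      apply prox_quad hne hAc hr hU hbA hwn hδ0 (by linarith)
      have hpt : b + δ • δ⁻¹ • (a + t • v - b) = a + t • v := by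
        rw [smul_smul, mul_inv_cancel₀ (ne_of_gt hδ0), one_smul]
        abel
      rw [hpt, ← hδ]
    by_cases hgood : ∃ t : ℝ, 0 < t ∧ t ≤ t₂ ∧
        ‖(infDist (a + t • v) A)⁻¹ • (a + t • v - foot A (a + t • v)) - v‖ ≤ θ
    · obtain ⟨t, ht0, htle, hwv⟩ := hgood
      obtain ⟨_, _, hbA, _, hba, _, hquad⟩ := hfacts t ht0 htle
      exact ⟨foot A (a + t • v), _, hbA, by linarith [hba, htle, ht₂θ], hwv, hquad⟩
    · exfalso
      push_neg at hgood
      -- every foot direction has definite positive inner product with v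
      have hm : ∀ t : ℝ, 0 < t → t ≤ t₂ →
          θ ^ 2 / 4 * ‖foot A (a + t • v) - a‖ ≤ ⟪v, foot A (a + t • v) - a⟫ := by
        intro t ht0 htle
        obtain ⟨hδ0, hδt, hbA, hbne, hba, hwn, _⟩ := hfacts t ht0 htle
        set δ := infDist (a + t • v) A with hδ
        set b := foot A (a + t • v) with hbdef
        set w := δ⁻¹ • (a + t • v - b) with hwdef
        have hwv := hgood t ht0 htle
        have hwv2 : ⟪w, v⟫ < 1 - θ ^ 2 / 2 := by
          have h1 : θ ^ 2 < ‖w - v‖ ^ 2 := by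
            have := norm_nonneg (w - v)
            nlinarith [hwv]
          rw [norm_sub_sq_real, hwn, hv] at h1
          nlinarith [h1]
        have hinner : ⟪w, v⟫ = δ⁻¹ * (t - ⟪v, b - a⟫) := by
          rw [hwdef, real_inner_smul_left]
          congr 1
          have hsplit : a + t • v - b = t • v - (b - a) := by abel
          rw [hsplit, inner_sub_left, real_inner_smul_left, real_inner_self_eq_norm_sq, hv]
          rw [real_inner_comm]
          ring
        rw [hinner] at hwv2
        have h3 : t - ⟪v, b - a⟫ < δ * (1 - θ ^ 2 / 2) := by
          have h4 := mul_lt_mul_of_pos_left hwv2 hδ0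
          rwa [← mul_assoc, mul_inv_cancel₀ (ne_of_gt hδ0), one_mul] at h4
        have h5 : δ * (1 - θ ^ 2 / 2) ≤ t * (1 - θ ^ 2 / 2) := by
          apply mul_le_mul_of_nonneg_right hδt.le
          nlinarith [hθ1, hθ]
        nlinarith [h3, h5, hba, hθ]
      -- build a tangent direction with positive inner product : contradiction
      set tt : ℕ → ℝ := fun i => t₂ / ((i : ℝ) + 1) with htt
      have htt0 : ∀ i, 0 < tt i := fun i => by positivity
      have httle : ∀ i, tt i ≤ t₂ := fun i => by
        rw [htt]
        rw [div_le_iff₀ (by positivity : (0:ℝ) < (i:ℝ) + 1)]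
        nlinarith [ht₂0.le, (Nat.cast_nonneg i : (0:ℝ) ≤ (i:ℝ))]
      set bb : ℕ → E := fun i => foot A (a + tt i • v) with hbb
      have hbbA : ∀ i, bb i ∈ A := fun i => foot_mem hne hAc _
      have hbbne : ∀ i, bb i ≠ a := fun i => (hfacts _ (htt0 i) (httle i)).2.2.2.1
      have hnn : ∀ i, 0 < ‖bb i - a‖ := fun i =>
        norm_pos_iff.2 (sub_ne_zero.2 (hbbne i))
      have hnle : ∀ i, ‖bb i - a‖ ≤ 2 * tt i := fun i => (hfacts _ (htt0 i) (httle i)).2.2.2.2.1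
      set uu : ℕ → E := fun i => ‖bb i - a‖⁻¹ • (bb i - a) with huu
      have huun : ∀ i, uu i ∈ sphere (0 : E) 1 := by
        intro i
        rw [mem_sphere_iff_norm, sub_zero, huu, norm_smul, Real.norm_eq_abs,
          abs_of_pos (inv_pos.2 (hnn i)), inv_mul_cancel₀ (ne_of_gt (hnn i))]
      obtain ⟨u0, hu0s, φ, hφ, huφ⟩ := (isCompact_sphere (0 : E) 1).tendsto_subseq huun
      have hbba : Tendsto (fun i => bb (φ i)) atTop (𝓝 a) := by
        rw [tendsto_iff_norm_sub_tendsto_zero]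
        apply squeeze_zero (f := fun i : ℕ => ‖bb (φ i) - a‖)
          (g := fun i : ℕ => 2 * t₂ * (1 / ((i : ℝ) + 1))) (fun i => norm_nonneg _)
        · intro i
          calc ‖bb (φ i) - a‖ ≤ 2 * tt (φ i) := hnle (φ i)
            _ = 2 * t₂ * (1 / ((φ i : ℝ) + 1)) := by rw [htt]; ring
            _ ≤ 2 * t₂ * (1 / ((i : ℝ) + 1)) := by
                apply mul_le_mul_of_nonneg_left _ (by positivity)
                apply one_div_le_one_div_of_le (by positivity)
                have : (i : ℝ) ≤ (φ i : ℝ) := by exact_mod_cast hφ.le_apply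
                linarith
        · simpa using tendsto_one_div_add_atTop_nhds_zero_nat.const_mul (2 * t₂)
      have hu0Tan : u0 ∈ Tan A a := by
        right
        refine ⟨fun i => bb (φ i), fun i => ‖bb (φ i) - a‖⁻¹,
          fun i => ⟨hbbA (φ i), hbbne (φ i), inv_pos.2 (hnn (φ i))⟩, hbba, ?_⟩
        have huueq : (fun i => ‖bb (φ i) - a‖⁻¹ • (bb (φ i) - a)) = uu ∘ φ := by
          funext i
          simp only [Function.comp, huu]
        rw [huueq]
        exact huφ
      have hneg := hN u0 hu0Tan
      have hpos : ∀ i, θ ^ 2 / 4 ≤ ⟪v, uu (φ i)⟫ := by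
        intro i
        have hn : 0 < ‖bb (φ i) - a‖ := hnn (φ i)
        have h1 : θ ^ 2 / 4 * ‖bb (φ i) - a‖ ≤ ⟪v, bb (φ i) - a⟫ := by
          have h0 := hm (tt (φ i)) (htt0 (φ i)) (httle (φ i))
          simpa only [hbb] using h0
        have hrw : ⟪v, uu (φ i)⟫ = ‖bb (φ i) - a‖⁻¹ * ⟪v, bb (φ i) - a⟫ := by
          simp only [huu, real_inner_smul_right]
        rw [hrw]
        have h2 : θ ^ 2 / 4 = ‖bb (φ i) - a‖⁻¹ * (θ ^ 2 / 4 * ‖bb (φ i) - a‖) := by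
          rw [mul_comm (θ ^ 2 / 4), ← mul_assoc, inv_mul_cancel₀ (ne_of_gt hn), one_mul]
        rw [h2]
        exact mul_le_mul_of_nonneg_left h1 (inv_pos.2 hn).le
      have hlim : Tendsto (fun i => ⟪v, uu (φ i)⟫) atTop (𝓝 ⟪v, u0⟫) :=
        Tendsto.inner tendsto_const_nhds huφ
      have hfin : θ ^ 2 / 4 ≤ ⟪v, u0⟫ :=
        le_of_tendsto_of_tendsto' tendsto_const_nhds hlim hpos
      nlinarith [hfin, hneg, hθ]
  -- conclude by passing to the limit
  intro c hc
  have hcl : ∀ m : ℕ, ∃ b w : E, b ∈ A ∧ ‖b - a‖ ≤ 1 / ((m : ℝ) + 1) ∧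
      ‖w - v‖ ≤ 1 / ((m : ℝ) + 1) ∧ ⟪w, c - b⟫ ≤ ‖c - b‖ ^ 2 / r := by
    intro m
    obtain ⟨b, w, hbA, hba, hwv, hquad⟩ := claim (1 / ((m : ℝ) + 1)) (by positivity)
      (by
        rw [div_le_one (by positivity : (0:ℝ) < (m:ℝ) + 1)]
        linarith [(Nat.cast_nonneg m : (0:ℝ) ≤ (m:ℝ))])
    exact ⟨b, w, hbA, hba, hwv, hquad c hc⟩
  choose b w hbA hba hwv hquad using hcl
  have hblim : Tendsto b atTop (𝓝 a) := by
    rw [tendsto_iff_norm_sub_tendsto_zero]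
    exact squeeze_zero (fun i => norm_nonneg _) hba tendsto_one_div_add_atTop_nhds_zero_nat
  have hwlim : Tendsto w atTop (𝓝 v) := by
    rw [tendsto_iff_norm_sub_tendsto_zero]
    exact squeeze_zero (fun i => norm_nonneg _) hwv tendsto_one_div_add_atTop_nhds_zero_nat
  have hL : Tendsto (fun m => ⟪w m, c - b m⟫) atTop (𝓝 ⟪v, c - a⟫) :=
    Tendsto.inner hwlim (tendsto_const_nhds.sub hblim)
  have hR : Tendsto (fun m => ‖c - b m‖ ^ 2 / r) atTop (𝓝 (‖c - a‖ ^ 2 / r)) := by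
    apply Tendsto.div_const
    exact ((tendsto_const_nhds.sub hblim).norm.pow 2)
  exact le_of_tendsto_of_tendsto' hL hR hquad

end Key

section Scaled

variable [FiniteDimensional ℝ E] {A : Set E} {r : ℝ}

lemma key_scaled (hne : A.Nonempty) (hAc : IsClosed A) (hr : 0 < r)
    (hU : ∀ x, infDist x A < r → UnpPt A x)
    {a u : E} (ha : a ∈ A) (hu : u ∈ Nor A a) :
    ∀ cc ∈ A, ⟪u, cc - a⟫ ≤ ‖u‖ * (‖cc - a‖ ^ 2 / r) := by
  intro cc hcc
  by_cases h0 : u = 0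
  · simp [h0]
  · have hnu : 0 < ‖u‖ := norm_pos_iff.2 h0
    have h1 : ‖u‖⁻¹ • u ∈ Nor A a := smul_mem_nor hu (inv_nonneg.2 hnu.le)
    have h2 : ‖‖u‖⁻¹ • u‖ = 1 := by
      rw [norm_smul, Real.norm_eq_abs, abs_of_pos (inv_pos.2 hnu),
        inv_mul_cancel₀ (ne_of_gt hnu)]
    have h3 := key hne hAc hr hU ha h2 h1 cc hcc
    rw [real_inner_smul_left] at h3
    calc ⟪u, cc - a⟫ = ‖u‖ * (‖u‖⁻¹ * ⟪u, cc - a⟫) := by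
          rw [← mul_assoc, mul_inv_cancel₀ (ne_of_gt hnu), one_mul]
      _ ≤ ‖u‖ * (‖cc - a‖ ^ 2 / r) := mul_le_mul_of_nonneg_left h3 hnu.le

end Scaled

end StmtAux

open StmtAux in
/-- The set of points whose normal cone contains a k-dimensional halfspace is closed. -/
theorem stmt4 {d : ℕ} (A : Set (EuclideanSpace ℝ (Fin d)))
    (hreach : 0 < setReach A) (k : ℕ) (hk : 1 ≤ k) (hkd : k ≤ d) :
    IsClosed {a : EuclideanSpace ℝ (Fin d) | a ∈ A ∧
      ∃ (W : Submodule ℝ (EuclideanSpace ℝ (Fin d))) (v : EuclideanSpace ℝ (Fin d)),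
        Module.finrank ℝ W = k - 1 ∧ ‖v‖ = 1 ∧ (∀ w ∈ W, ⟪w, v⟫ = 0) ∧
        {x : EuclideanSpace ℝ (Fin d) | ∃ w ∈ W, ∃ t : ℝ, 0 ≤ t ∧ x = w + t • v}
          ⊆ Nor A a} := by
  classical
  apply IsSeqClosed.isClosed
  intro aseq p hmem htend
  simp only [mem_setOf_eq] at hmem ⊢
  have hne : A.Nonempty := ⟨aseq 0, (hmem 0).1⟩
  -- extract a uniform radius of unique projections
  obtain ⟨c, hc0, hcs⟩ := ENNReal.lt_iff_exists_nnreal_btwn.1 hreach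
  have hc0' : (0:ℝ) < (c : ℝ) := by
    have : (0:ℝ≥0) < c := by exact_mod_cast hc0
    exact_mod_cast this
  have hUa : ∀ a ∈ A, ∀ x, dist x a < (c : ℝ) → UnpPt A x := by
    intro a ha
    have h1 : (c : ℝ≥0∞) < locReach A a := by
      refine lt_of_lt_of_le hcs ?_
      rw [setReach]
      exact iInf₂_le a ha
    rw [locReach, lt_iSup_iff] at h1
    obtain ⟨r', h2⟩ := h1
    rw [lt_iSup_iff] at h2
    obtain ⟨hP, hlt⟩ := h2
    have hcr : (c : ℝ) < (r' : ℝ) := by exact_mod_cast hlt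
    intro x hx
    exact hP x (lt_trans hx hcr)
  have hUg : ∀ x, infDist x A < (c : ℝ) → UnpPt A x := by
    intro x hx
    obtain ⟨y, hy, hyd⟩ := (infDist_lt_iff hne).1 hx
    exact hUa y hy x hyd
  have hAc : IsClosed A := by
    apply isClosed_of_closure_subset
    intro x hx
    have h0 : infDist x A = 0 := (mem_closure_iff_infDist_zero hne).1 hx
    have hx' : infDist x A < (c : ℝ) := by rw [h0]; exact hc0'
    obtain ⟨y, ⟨hyA, hyd⟩, _⟩ := hUg x hx'
    have hxy : dist x y = 0 := by rw [hyd, h0]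
    rw [dist_eq_zero] at hxy
    rw [hxy]
    exact hyA
  have hpA : p ∈ A := hAc.mem_of_tendsto htend (Eventually.of_forall (fun n => (hmem n).1))
  -- choose the halfspace data
  have hdata := fun n => (hmem n).2
  choose W vv hWrank hvn hperp hsub using hdata
  -- orthonormal bases of the subspaces
  set f : ℕ → Fin (k - 1) → EuclideanSpace ℝ (Fin d) := fun n j =>
    (((stdOrthonormalBasis ℝ (W n)).reindex (finCongr (by rw [hWrank n]))) j : EuclideanSpace ℝ (Fin d))
    with hf
  have hfW : ∀ n j, f n j ∈ W n := fun n j => SetLike.coe_mem _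
  have hfON : ∀ n, Orthonormal ℝ (f n) := by
    intro n
    rw [orthonormal_iff_ite]
    intro i j
    have h1 := ((stdOrthonormalBasis ℝ (W n)).reindex (finCongr (by rw [hWrank n]))).orthonormal
    rw [orthonormal_iff_ite] at h1
    have h2 := h1 i j
    rwa [Submodule.coe_inner] at h2
  -- compactness
  set P : ℕ → (Fin (k - 1) → EuclideanSpace ℝ (Fin d)) × EuclideanSpace ℝ (Fin d) :=
    fun n => (f n, vv n) with hP
  have hPS : ∀ n, P n ∈ (Set.univ.pi fun _ : Fin (k - 1) =>
      sphere (0 : EuclideanSpace ℝ (Fin d)) 1) ×ˢ sphere (0 : EuclideanSpace ℝ (Fin d)) 1 := by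
    intro n
    constructor
    · intro j _
      rw [mem_sphere_iff_norm, sub_zero]
      exact (hfON n).1 j
    · rw [mem_sphere_iff_norm, sub_zero]
      exact hvn n
  have hScompact : IsCompact ((Set.univ.pi fun _ : Fin (k - 1) =>
      sphere (0 : EuclideanSpace ℝ (Fin d)) 1) ×ˢ sphere (0 : EuclideanSpace ℝ (Fin d)) 1) :=
    (isCompact_univ_pi fun _ => isCompact_sphere _ _).prod (isCompact_sphere _ _)
  obtain ⟨⟨F, v0⟩, hFS, φ, hφ, hPφ⟩ := hScompact.tendsto_subseq hPS
  have hFlim : Tendsto (fun m => f (φ m)) atTop (𝓝 F) :=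
    (continuous_fst.tendsto _).comp hPφ
  have hvlim : Tendsto (fun m => vv (φ m)) atTop (𝓝 v0) :=
    (continuous_snd.tendsto _).comp hPφ
  have hFjlim : ∀ j, Tendsto (fun m => f (φ m) j) atTop (𝓝 (F j)) := fun j =>
    ((continuous_apply j).tendsto _).comp hFlim
  have halim : Tendsto (fun m => aseq (φ m)) atTop (𝓝 p) := htend.comp hφ.tendsto_atTop
  -- limit data
  have hv0 : ‖v0‖ = 1 := by
    have h1 : Tendsto (fun m => ‖vv (φ m)‖) atTop (𝓝 ‖v0‖) := hvlim.norm
    have h2 : Tendsto (fun m => ‖vv (φ m)‖) atTop (𝓝 1) := by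
      have : (fun m => ‖vv (φ m)‖) = fun _ => (1:ℝ) := funext fun m => hvn (φ m)
      rw [this]; exact tendsto_const_nhds
    exact tendsto_nhds_unique h1 h2
  have hFON : Orthonormal ℝ F := by
    rw [orthonormal_iff_ite]
    intro i j
    have h1 : Tendsto (fun m => ⟪f (φ m) i, f (φ m) j⟫) atTop (𝓝 ⟪F i, F j⟫) :=
      Tendsto.inner (hFjlim i) (hFjlim j)
    have h2 : (fun m => ⟪f (φ m) i, f (φ m) j⟫) = fun _ => if i = j then (1:ℝ) else 0 := by
      funext m
      have := hfON (φ m)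
      rw [orthonormal_iff_ite] at this
      exact this i j
    rw [h2] at h1
    exact tendsto_nhds_unique (by rw [← h2]; exact Tendsto.inner (hFjlim i) (hFjlim j)) h1 ▸
      tendsto_nhds_unique h1 tendsto_const_nhds
  have hFv0 : ∀ j, ⟪F j, v0⟫ = 0 := by
    intro j
    have h1 : Tendsto (fun m => ⟪f (φ m) j, vv (φ m)⟫) atTop (𝓝 ⟪F j, v0⟫) :=
      Tendsto.inner (hFjlim j) hvlim
    have h2 : (fun m => ⟪f (φ m) j, vv (φ m)⟫) = fun _ => (0:ℝ) := by
      funext m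
      exact hperp (φ m) (f (φ m) j) (hfW (φ m) j)
    rw [h2] at h1
    exact tendsto_nhds_unique h1 tendsto_const_nhds
  refine ⟨hpA, Submodule.span ℝ (Set.range F), v0, ?_, hv0, ?_, ?_⟩
  · rw [finrank_span_eq_card hFON.linearIndependent]
    simp
  · intro w hw
    induction hw using Submodule.span_induction with
    | mem y hy =>
        obtain ⟨j, rfl⟩ := hy
        exact hFv0 j
    | zero => simp
    | add y z _ _ hy hz => rw [inner_add_left, hy, hz, add_zero]
    | smul t y _ hy => rw [real_inner_smul_left, hy, mul_zero]
  · -- the halfspace is contained in the normal cone at p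
    intro x hx
    obtain ⟨wv, hwW, tc, htc0, hxeq⟩ := hx
    obtain ⟨co, hco⟩ := (Submodule.mem_span_range_iff_exists_fun ℝ).1 hwW
    -- approximating sequence in the normal cones
    set xs : ℕ → EuclideanSpace ℝ (Fin d) :=
      fun m => (∑ j, co j • f (φ m) j) + tc • vv (φ m) with hxs
    have hxsN : ∀ m, xs m ∈ Nor A (aseq (φ m)) := by
      intro m
      apply hsub (φ m)
      exact ⟨∑ j, co j • f (φ m) j,
        Submodule.sum_smul_mem _ _ (fun j _ => hfW (φ m) j), tc, htc0, rfl⟩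
    have hxslim : Tendsto xs atTop (𝓝 x) := by
      rw [hxeq, ← hco]
      apply Tendsto.add
      · apply tendsto_finset_sum
        intro j _
        exact (hFjlim j).const_smul (co j)
      · exact hvlim.const_smul tc
    -- pass the quadratic inequality to the limit
    have hquad : ∀ cc ∈ A, ⟪x, cc - p⟫ ≤ ‖x‖ / (c:ℝ) * ‖cc - p‖ ^ 2 := by
      intro cc hcc
      have hL : Tendsto (fun m => ⟪xs m, cc - aseq (φ m)⟫) atTop (𝓝 ⟪x, cc - p⟫) :=
        Tendsto.inner hxslim (tendsto_const_nhds.sub halim)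
      have hR : Tendsto (fun m => ‖xs m‖ * (‖cc - aseq (φ m)‖ ^ 2 / (c:ℝ))) atTop
          (𝓝 (‖x‖ * (‖cc - p‖ ^ 2 / (c:ℝ)))) :=
        hxslim.norm.mul (((tendsto_const_nhds.sub halim).norm.pow 2).div_const _)
      have hle : ∀ m, ⟪xs m, cc - aseq (φ m)⟫ ≤ ‖xs m‖ * (‖cc - aseq (φ m)‖ ^ 2 / (c:ℝ)) :=
        fun m => key_scaled hne hAc hc0' hUg ((hmem (φ m)).1) (hxsN m) cc hcc
      have := le_of_tendsto_of_tendsto' hL hR hle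
      calc ⟪x, cc - p⟫ ≤ ‖x‖ * (‖cc - p‖ ^ 2 / (c:ℝ)) := this
        _ = ‖x‖ / (c:ℝ) * ‖cc - p‖ ^ 2 := by ring
    exact mem_nor_of_quadratic (by positivity) hquad
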